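/- arXiv:2410.14163 — 3 statements merged into one kernel-verified Lean document; each statement's English description precedes it below -/
import Mathlib

section
/- The convex hull of S is a strict subset of the aggregation closure over ℝ²; that is, conv(S) ⊊ ⋂_{λ ∈ ℝ²} conv(S_λ). -/
open Set

/-- The box `[0,1]³`. -/
def unitCube : Set (ℝ × ℝ × ℝ) :=
  {p | p.1 ∈ Icc (0:ℝ) 1 ∧ p.2.1 ∈ Icc (0:ℝ) 1 ∧ p.2.2 ∈ Icc (0:ℝ) 1}

/-- `S = {(x,y₁,y₂) ∈ [0,1]³ : −2xy₁ + 9xy₂ + y₁ − 5y₂ = 0, 5xy₁ + 3y₁ + 3y₂ = 6}`. -/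
def setS : Set (ℝ × ℝ × ℝ) :=
  {p ∈ unitCube |
    -2 * p.1 * p.2.1 + 9 * p.1 * p.2.2 + p.2.1 - 5 * p.2.2 = 0 ∧
    5 * p.1 * p.2.1 + 3 * p.2.1 + 3 * p.2.2 = 6}

/-- The aggregated set `S_λ` with weights `l = (λ₁, λ₂)`. -/
def setAgg (l : ℝ × ℝ) : Set (ℝ × ℝ × ℝ) :=
  {p ∈ unitCube |
    l.1 * (-2 * p.1 * p.2.1 + 9 * p.1 * p.2.2 + p.2.1 - 5 * p.2.2) +
      l.2 * (5 * p.1 * p.2.1 + 3 * p.2.1 + 3 * p.2.2 - 6) = 0}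

private lemma mem_setAgg_iff (l : ℝ × ℝ) (q : ℝ × ℝ × ℝ) :
    q ∈ setAgg l ↔ ((0 ≤ q.1 ∧ q.1 ≤ 1) ∧ (0 ≤ q.2.1 ∧ q.2.1 ≤ 1) ∧ (0 ≤ q.2.2 ∧ q.2.2 ≤ 1)) ∧
      l.1 * (-2 * q.1 * q.2.1 + 9 * q.1 * q.2.2 + q.2.1 - 5 * q.2.2) +
      l.2 * (5 * q.1 * q.2.1 + 3 * q.2.1 + 3 * q.2.2 - 6) = 0 := by
  simp [setAgg, unitCube, Set.mem_Icc]

private lemma S_subset_agg (l : ℝ × ℝ) : setS ⊆ setAgg l := by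
  rintro q ⟨hc, hf, hg⟩
  exact ⟨hc, by linear_combination l.1 * hf + l.2 * hg⟩

private lemma mem_hull4 {s : Set (ℝ × ℝ × ℝ)} {z0 z1 z2 z3 : ℝ × ℝ × ℝ}
    (h0 : z0 ∈ s) (h1 : z1 ∈ s) (h2 : z2 ∈ s) (h3 : z3 ∈ s)
    {a0 a1 a2 a3 : ℝ} (ha0 : 0 ≤ a0) (ha1 : 0 ≤ a1) (ha2 : 0 ≤ a2) (ha3 : 0 ≤ a3)
    (hsum : a0 + a1 + a2 + a3 = 1) :
    a0 • z0 + a1 • z1 + a2 • z2 + a3 • z3 ∈ convexHull ℝ s := by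
  have hc : Convex ℝ (convexHull ℝ s) := convex_convexHull ℝ s
  have key := hc.sum_mem (t := (Finset.univ : Finset (Fin 4)))
      (w := ![a0, a1, a2, a3]) (z := ![z0, z1, z2, z3])
      (by intro i _; fin_cases i <;> assumption)
      (by simp [Fin.sum_univ_four]; linarith)
      (by intro i _; fin_cases i <;> exact subset_convexHull ℝ s (by assumption))
  simpa [Fin.sum_univ_four, add_assoc] using key

-- Region B : l = (l1, u*l1), l1 > 0, u ≥ 0
set_option maxHeartbeats 2000000 in
private lemma memB (l1 u : ℝ) (h1 : l1 ≠ 0) (hu : 0 ≤ u) :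
    ((7:ℝ)/12, ((3:ℝ)/4, (2:ℝ)/3)) ∈ convexHull ℝ (setAgg (l1, u * l1)) := by
  have d0 : (0:ℝ) < 23 + 10*u := by linarith
  have d1 : (0:ℝ) < 12 + 15*u := by linarith
  have d2 : (0:ℝ) < 7 + 5*u := by linarith
  have hu2 : 0 ≤ u^2 := sq_nonneg u
  have hu3 : 0 ≤ u^3 := by positivity
  have dQ : (0:ℝ) < 987360 + 1851972*u + 929220*u^2 + 156600*u^3 := by linarith
  have hd0 := d0.ne'
  have hd1 := d1.ne'
  have hd2 := d2.ne'
  have hdQ := dQ.ne'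
  have hz0 : ((13+9*u)/(23+10*u), ((1:ℝ)/2, (3:ℝ)/4)) ∈ setAgg (l1, u * l1) := by
    rw [mem_setAgg_iff]
    refine ⟨⟨⟨by positivity, ?_⟩, by norm_num, by norm_num⟩, ?_⟩
    · rw [div_le_one d0]; linarith
    · field_simp
      ring
  have hz1 : ((7+9*u)/(12+15*u), ((3:ℝ)/4, (1:ℝ)/2)) ∈ setAgg (l1, u * l1) := by
    rw [mem_setAgg_iff]
    refine ⟨⟨⟨by positivity, ?_⟩, by norm_num, by norm_num⟩, ?_⟩
    · rw [div_le_one d1]; linarith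
    · field_simp
      ring
  have hz2 : (4/(7+5*u), ((1:ℝ), (1:ℝ))) ∈ setAgg (l1, u * l1) := by
    rw [mem_setAgg_iff]
    refine ⟨⟨⟨by positivity, ?_⟩, by norm_num, by norm_num⟩, ?_⟩
    · rw [div_le_one d2]; linarith
    · field_simp
      ring
  have hz3 : ((1:ℝ), ((24:ℝ)/35, (6:ℝ)/35)) ∈ setAgg (l1, u * l1) := by
    rw [mem_setAgg_iff]
    exact ⟨⟨by norm_num, by norm_num, by norm_num⟩, by norm_num⟩
  have ha0 : 0 ≤ (223744 + 452308*u + 263380*u^2 + 47400*u^3) / (987360 + 1851972*u + 929220*u^2 + 156600*u^3) :=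
    div_nonneg (by linarith) dQ.le
  have ha1 : 0 ≤ (519456 + 755208*u + 134280*u^2 + 2400*u^3) / (987360 + 1851972*u + 929220*u^2 + 156600*u^3) :=
    div_nonneg (by linarith) dQ.le
  have ha2 : 0 ≤ (227920 + 491611*u + 318235*u^2 + 59550*u^3) / (987360 + 1851972*u + 929220*u^2 + 156600*u^3) :=
    div_nonneg (by linarith) dQ.le
  have ha3 : 0 ≤ (16240 + 152845*u + 213325*u^2 + 47250*u^3) / (987360 + 1851972*u + 929220*u^2 + 156600*u^3) :=
    div_nonneg (by linarith) dQ.le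
  have hsum : (223744 + 452308*u + 263380*u^2 + 47400*u^3) / (987360 + 1851972*u + 929220*u^2 + 156600*u^3)
      + (519456 + 755208*u + 134280*u^2 + 2400*u^3) / (987360 + 1851972*u + 929220*u^2 + 156600*u^3)
      + (227920 + 491611*u + 318235*u^2 + 59550*u^3) / (987360 + 1851972*u + 929220*u^2 + 156600*u^3)
      + (16240 + 152845*u + 213325*u^2 + 47250*u^3) / (987360 + 1851972*u + 929220*u^2 + 156600*u^3) = 1 := by
    field_simp
    ring
  have key := mem_hull4 hz0 hz1 hz2 hz3 ha0 ha1 ha2 ha3 hsum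
  have heq : ((7:ℝ)/12, ((3:ℝ)/4, (2:ℝ)/3)) =
      ((223744 + 452308*u + 263380*u^2 + 47400*u^3) / (987360 + 1851972*u + 929220*u^2 + 156600*u^3)) • (((13+9*u)/(23+10*u) : ℝ), ((1:ℝ)/2, (3:ℝ)/4))
      + ((519456 + 755208*u + 134280*u^2 + 2400*u^3) / (987360 + 1851972*u + 929220*u^2 + 156600*u^3)) • (((7+9*u)/(12+15*u) : ℝ), ((3:ℝ)/4, (1:ℝ)/2))
      + ((227920 + 491611*u + 318235*u^2 + 59550*u^3) / (987360 + 1851972*u + 929220*u^2 + 156600*u^3)) • ((4/(7+5*u) : ℝ), ((1:ℝ), (1:ℝ)))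
      + ((16240 + 152845*u + 213325*u^2 + 47250*u^3) / (987360 + 1851972*u + 929220*u^2 + 156600*u^3)) • ((1:ℝ), ((24:ℝ)/35, (6:ℝ)/35)) := by
    simp only [Prod.smul_mk, Prod.mk_add_mk, smul_eq_mul, Prod.mk.injEq]
    refine ⟨?_, ?_, ?_⟩
    · field_simp
      ring
    · field_simp
      ring
    · field_simp
      ring
  rw [heq]
  exact key

-- Region A1 : l = (-(r*l2), l2), 0 ≤ r ≤ 2
set_option maxHeartbeats 2000000 in
private lemma memA1 (l2 r : ℝ) (hr0 : 0 ≤ r) (hr2 : r ≤ 2) :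
    ((7:ℝ)/12, ((3:ℝ)/4, (2:ℝ)/3)) ∈ convexHull ℝ (setAgg (-(r*l2), l2)) := by
  have d1 : (0:ℝ) < 32 + 4*r := by linarith
  have d2 : (0:ℝ) < 3 + 5*r := by linarith
  have hr2' : 0 ≤ r^2 := sq_nonneg r
  have hr3' : 0 ≤ r^3 := by positivity
  have dQ : (0:ℝ) < 102060 + 88452*r + 642492*r^2 + 14580*r^3 := by linarith
  have hd1 := d1.ne'
  have hd2 := d2.ne'
  have hdQ := dQ.ne'
  have hz0 : (((1:ℝ)/2), ((30-3*r)/44, (3:ℝ)/4)) ∈ setAgg (-(r*l2), l2) := by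
    rw [mem_setAgg_iff]
    refine ⟨⟨by norm_num, ⟨by linarith [div_nonneg (by linarith : (0:ℝ) ≤ 30-3*r) (by norm_num : (0:ℝ) ≤ 44)], ?_⟩, by norm_num⟩, ?_⟩
    · rw [div_le_one (by norm_num : (0:ℝ) < 44)]; linarith
    · field_simp
      ring
  have hz1 : ((1:ℝ), ((15+12*r)/(32+4*r), (3:ℝ)/4)) ∈ setAgg (-(r*l2), l2) := by
    rw [mem_setAgg_iff]
    refine ⟨⟨by norm_num, ⟨by positivity, ?_⟩, by norm_num⟩, ?_⟩
    · rw [div_le_one d1]; linarith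
    · field_simp
      ring
  have hz2 : ((0:ℝ), ((1:ℝ), (3+r)/(3+5*r))) ∈ setAgg (-(r*l2), l2) := by
    rw [mem_setAgg_iff]
    refine ⟨⟨by norm_num, by norm_num, ⟨by positivity, ?_⟩⟩, ?_⟩
    · rw [div_le_one d2]; linarith
    · field_simp
      ring
  have hz3 : ((1:ℝ), ((24:ℝ)/35, (6:ℝ)/35)) ∈ setAgg (-(r*l2), l2) := by
    rw [mem_setAgg_iff]
    exact ⟨⟨by norm_num, by norm_num, by norm_num⟩, by norm_num⟩
  have hn0 : (0:ℝ) ≤ 10692 - 110484*r + 427680*r^2 := by nlinarith [sq_nonneg (855360*r - 110484)]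
  have hn1 : (0:ℝ) ≤ 23424 + 139984*r + 114572*r^2 + 12180*r^3 := by linarith
  have hn2 : (0:ℝ) ≤ 37179 + 92097*r + 53865*r^2 + 6075*r^3 := by linarith
  have hn3 : (0:ℝ) ≤ 30765 - 33145*r + 46375*r^2 - 3675*r^3 := by
    nlinarith [mul_nonneg (sq_nonneg r) (by linarith : (0:ℝ) ≤ 2 - r), sq_nonneg (78050*r - 33145)]
  have ha0 := div_nonneg hn0 dQ.le
  have ha1 := div_nonneg hn1 dQ.le
  have ha2 := div_nonneg hn2 dQ.le
  have ha3 := div_nonneg hn3 dQ.le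
  have hsum : (10692 - 110484*r + 427680*r^2) / (102060 + 88452*r + 642492*r^2 + 14580*r^3)
      + (23424 + 139984*r + 114572*r^2 + 12180*r^3) / (102060 + 88452*r + 642492*r^2 + 14580*r^3)
      + (37179 + 92097*r + 53865*r^2 + 6075*r^3) / (102060 + 88452*r + 642492*r^2 + 14580*r^3)
      + (30765 - 33145*r + 46375*r^2 - 3675*r^3) / (102060 + 88452*r + 642492*r^2 + 14580*r^3) = 1 := by
    field_simp
    ring
  have key := mem_hull4 hz0 hz1 hz2 hz3 ha0 ha1 ha2 ha3 hsum
  have heqn : ((7:ℝ)/12, ((3:ℝ)/4, (2:ℝ)/3)) =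
      ((10692 - 110484*r + 427680*r^2) / (102060 + 88452*r + 642492*r^2 + 14580*r^3)) • (((1:ℝ)/2), ((30-3*r)/44, (3:ℝ)/4))
      + ((23424 + 139984*r + 114572*r^2 + 12180*r^3) / (102060 + 88452*r + 642492*r^2 + 14580*r^3)) • ((1:ℝ), ((15+12*r)/(32+4*r), (3:ℝ)/4))
      + ((37179 + 92097*r + 53865*r^2 + 6075*r^3) / (102060 + 88452*r + 642492*r^2 + 14580*r^3)) • ((0:ℝ), ((1:ℝ), (3+r)/(3+5*r)))
      + ((30765 - 33145*r + 46375*r^2 - 3675*r^3) / (102060 + 88452*r + 642492*r^2 + 14580*r^3)) • ((1:ℝ), ((24:ℝ)/35, (6:ℝ)/35)) := by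
    simp only [Prod.smul_mk, Prod.mk_add_mk, smul_eq_mul, Prod.mk.injEq]
    refine ⟨?_, ?_, ?_⟩
    · field_simp
      ring
    · field_simp
      ring
    · field_simp
      ring
  rw [heqn]
  exact key

-- Region A2 : l = (-(r*l2), l2), r ≥ 2
set_option maxHeartbeats 2000000 in
private lemma memA2 (l2 r : ℝ) (hr : 2 ≤ r) :
    ((7:ℝ)/12, ((3:ℝ)/4, (2:ℝ)/3)) ∈ convexHull ℝ (setAgg (-(r*l2), l2)) := by
  have hr0 : (0:ℝ) < r := by linarith
  have d0 : (0:ℝ) < 9*r := by linarith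
  have d1 : (0:ℝ) < 7*r - 5 := by linarith
  have d2 : (0:ℝ) < 12 + 20*r := by linarith
  have hs : (0:ℝ) ≤ r - 2 := by linarith
  have hs2 : (0:ℝ) ≤ (r-2)^2 := sq_nonneg _
  have hs3 : (0:ℝ) ≤ (r-2)^3 := by positivity
  have dQ : (0:ℝ) < -4860 + 10152*r - 43524*r^2 + 85320*r^3 := by nlinarith [hs, hs2, hs3]
  have hd0 := d0.ne'
  have hd1 := d1.ne'
  have hd2 := d2.ne'
  have hdQ := dQ.ne'
  have hz0 : ((5*r-9)/(9*r), ((0:ℝ), (1:ℝ)/2)) ∈ setAgg (-(r*l2), l2) := by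
    rw [mem_setAgg_iff]
    refine ⟨⟨⟨div_nonneg (by linarith) d0.le, ?_⟩, by norm_num, by norm_num⟩, ?_⟩
    · rw [div_le_one d0]; linarith
    · field_simp
      ring
  have hz1 : ((4*r-2)/(7*r-5), ((3:ℝ)/4, (3:ℝ)/4)) ∈ setAgg (-(r*l2), l2) := by
    rw [mem_setAgg_iff]
    refine ⟨⟨⟨div_nonneg (by linarith) d1.le, ?_⟩, by norm_num, by norm_num⟩, ?_⟩
    · rw [div_le_one d1]; linarith
    · generalize hE : 7*r - 5 = E at hd1 ⊢
      field_simp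
      rw [← hE]
      ring
  have hz2 : ((0:ℝ), ((3:ℝ)/4, (15+3*r)/(12+20*r))) ∈ setAgg (-(r*l2), l2) := by
    rw [mem_setAgg_iff]
    refine ⟨⟨by norm_num, by norm_num, ⟨by positivity, ?_⟩⟩, ?_⟩
    · rw [div_le_one d2]; linarith
    · field_simp
      ring
  have hz3 : ((2:ℝ)/3, ((9:ℝ)/11, (3:ℝ)/11)) ∈ setAgg (-(r*l2), l2) := by
    rw [mem_setAgg_iff]
    exact ⟨⟨by norm_num, by norm_num, by norm_num⟩, by norm_num⟩
  have hn0 : (0:ℝ) ≤ 567*r - 1755*r^2 + 1242*r^3 := by nlinarith [hs, hs2, hs3]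
  have hn1 : (0:ℝ) ≤ -5670 - 4167*r - 33018*r^2 + 69951*r^3 := by nlinarith [hs, hs2, hs3]
  have hn2 : (0:ℝ) ≤ 810 + 7515*r + 10554*r^2 + 465*r^3 := by nlinarith [hs, hs2, hs3]
  have hn3 : (0:ℝ) ≤ 6237*r - 19305*r^2 + 13662*r^3 := by nlinarith [hs, hs2, hs3]
  have ha0 := div_nonneg hn0 dQ.le
  have ha1 := div_nonneg hn1 dQ.le
  have ha2 := div_nonneg hn2 dQ.le
  have ha3 := div_nonneg hn3 dQ.le
  have hsum : (567*r - 1755*r^2 + 1242*r^3) / (-4860 + 10152*r - 43524*r^2 + 85320*r^3)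
      + (-5670 - 4167*r - 33018*r^2 + 69951*r^3) / (-4860 + 10152*r - 43524*r^2 + 85320*r^3)
      + (810 + 7515*r + 10554*r^2 + 465*r^3) / (-4860 + 10152*r - 43524*r^2 + 85320*r^3)
      + (6237*r - 19305*r^2 + 13662*r^3) / (-4860 + 10152*r - 43524*r^2 + 85320*r^3) = 1 := by
    generalize hD : -4860 + 10152*r - 43524*r^2 + 85320*r^3 = D at hdQ ⊢
    field_simp
    rw [← hD]
    ring
  have key := mem_hull4 hz0 hz1 hz2 hz3 ha0 ha1 ha2 ha3 hsum
  have heqn : ((7:ℝ)/12, ((3:ℝ)/4, (2:ℝ)/3)) =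
      ((567*r - 1755*r^2 + 1242*r^3) / (-4860 + 10152*r - 43524*r^2 + 85320*r^3)) • ((5*r-9)/(9*r), ((0:ℝ), (1:ℝ)/2))
      + ((-5670 - 4167*r - 33018*r^2 + 69951*r^3) / (-4860 + 10152*r - 43524*r^2 + 85320*r^3)) • ((4*r-2)/(7*r-5), ((3:ℝ)/4, (3:ℝ)/4))
      + ((810 + 7515*r + 10554*r^2 + 465*r^3) / (-4860 + 10152*r - 43524*r^2 + 85320*r^3)) • ((0:ℝ), ((3:ℝ)/4, (15+3*r)/(12+20*r)))
      + ((6237*r - 19305*r^2 + 13662*r^3) / (-4860 + 10152*r - 43524*r^2 + 85320*r^3)) • ((2:ℝ)/3, ((9:ℝ)/11, (3:ℝ)/11)) := by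
    simp only [Prod.smul_mk, Prod.mk_add_mk, smul_eq_mul, Prod.mk.injEq]
    refine ⟨?_, ?_, ?_⟩
    · generalize hD : -4860 + 10152*r - 43524*r^2 + 85320*r^3 = D at hdQ ⊢
      generalize hE : 7*r - 5 = E at hd1 ⊢
      field_simp
      rw [← hD, ← hE]
      ring
    · generalize hD : -4860 + 10152*r - 43524*r^2 + 85320*r^3 = D at hdQ ⊢
      field_simp
      rw [← hD]
      ring
    · generalize hD : -4860 + 10152*r - 43524*r^2 + 85320*r^3 = D at hdQ ⊢
      field_simp
      rw [← hD]
      ring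
  rw [heqn]
  exact key

private lemma p0_not_mem : ((7:ℝ)/12, ((3:ℝ)/4, (2:ℝ)/3)) ∉ convexHull ℝ setS := by
  intro hp
  have hconv : Convex ℝ {q : ℝ × ℝ × ℝ | 2*q.2.1 + q.2.2 ≤ 21/10} := by
    intro a ha b hb s t hs ht hst
    simp only [Set.mem_setOf_eq] at ha hb ⊢
    simp only [Prod.fst_add, Prod.snd_add, Prod.smul_fst, Prod.smul_snd, smul_eq_mul]
    nlinarith [mul_le_mul_of_nonneg_left ha hs, mul_le_mul_of_nonneg_left hb ht]
  have hsub : convexHull ℝ setS ⊆ {q : ℝ × ℝ × ℝ | 2*q.2.1 + q.2.2 ≤ 21/10} := by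
    apply convexHull_min _ hconv
    rintro ⟨x, y, z⟩ hq
    simp only [setS, unitCube, Set.mem_setOf_eq, Set.mem_Icc] at hq
    obtain ⟨⟨⟨hx0, hx1⟩, ⟨hy0, hy1⟩, hz0, hz1⟩, hf, hg⟩ := hq
    simp only [Set.mem_setOf_eq]
    have h1 : y * (18 - 8*x - 45*x^2) = 30 - 54*x := by
      linear_combination 3*hf + (5-9*x)*hg
    have h2 : z * (45*x^2 + 8*x - 18) = 12*x - 6 := by
      linear_combination (5*x+3)*hf + (2*x-1)*hg
    have hE : 18 - 8*x - 45*x^2 < 0 := by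
      nlinarith [sq_nonneg (45*x - 23), h1, hy0, hy1]
    nlinarith [sq_nonneg (1890*x - 1032), hE, h1, h2]
  have := hsub hp
  simp only [Set.mem_setOf_eq] at this
  norm_num at this

private lemma p0_mem_all (l : ℝ × ℝ) :
    ((7:ℝ)/12, ((3:ℝ)/4, (2:ℝ)/3)) ∈ convexHull ℝ (setAgg l) := by
  obtain ⟨a, b⟩ := l
  by_cases ha : a = 0
  · subst ha
    have h : ((0:ℝ), b) = (-((0:ℝ) * b), b) := by norm_num
    rw [h]
    exact memA1 b 0 le_rfl (by norm_num)
  · rcases le_or_gt 0 (b / a) with hba | hba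
    · have h : ((a:ℝ), b) = (a, (b / a) * a) := by
        rw [div_mul_cancel₀ _ ha]
      rw [h]
      exact memB a (b / a) ha hba
    · have hb : b ≠ 0 := fun h => by rw [h, zero_div] at hba; exact lt_irrefl 0 hba
      have hr0 : 0 < -a / b := by
        rcases div_neg_iff.mp hba with ⟨h1, h2⟩ | ⟨h1, h2⟩
        · exact div_pos (by linarith) h1
        · exact div_pos_of_neg_of_neg (by linarith) h1
      have h : ((a:ℝ), b) = (-((-a / b) * b), b) := by
        rw [div_mul_cancel₀ _ hb]; norm_num
      rw [h]
      rcases le_total (-a / b) 2 with h2 | h2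
      · exact memA1 b (-a / b) hr0.le h2
      · exact memA2 b (-a / b) h2

theorem stmt3 :
    convexHull ℝ setS ⊂ ⋂ l : ℝ × ℝ, convexHull ℝ (setAgg l) := by
  have hsub : convexHull ℝ setS ⊆ ⋂ l : ℝ × ℝ, convexHull ℝ (setAgg l) :=
    Set.subset_iInter fun l => convexHull_mono (S_subset_agg l)
  refine (Set.ssubset_iff_of_subset hsub).mpr ?_
  refine ⟨((7:ℝ)/12, ((3:ℝ)/4, (2:ℝ)/3)), ?_, p0_not_mem⟩
  exact Set.mem_iInter.mpr p0_mem_all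
end

section
/- Every (x, y1, y2) ∈ S satisfies −2·x + 10·y1 − 10·y2 < 5; consequently, the point (7/10, 7/8, 1/6), which satisfies −2·(7/10) + 10·(7/8) − 10·(1/6) = 341/60 > 5, does not belong to conv(S). -/
open Set

lemma keyIneq (x y1 y2 : ℝ) (h10 : 0 ≤ y1) (h11 : y1 ≤ 1)
    (e1 : -2 * x * y1 + 9 * x * y2 + y1 - 5 * y2 = 0)
    (e2 : 5 * x * y1 + 3 * y1 + 3 * y2 = 6) :
    -2 * x + 10 * y1 - 10 * y2 < 5 := by
  have hE : -45 * x^2 * y1 - 8 * x * y1 + 18 * y1 + 54 * x - 30 = 0 := by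
    linear_combination 3 * e1 - (9 * x - 5) * e2
  have hA : 45 * x^2 + 8 * x - 18 > 0 := by
    by_contra h
    push_neg at h
    nlinarith [mul_nonneg (sub_nonneg.2 h11) (by linarith : (0:ℝ) ≤ 18 - 8*x - 45*x^2),
      sq_nonneg (45*x - 23)]
  have h54 : 54 * x - 30 ≥ 0 := by
    nlinarith [mul_nonneg h10 (le_of_lt hA)]
  have hP : 270*x^3 + 723*x^2 - 1248*x + 450 > 0 := by
    nlinarith [mul_nonneg (mul_self_nonneg x) h54, sq_nonneg (291*x - 208)]
  have hkey : (15 + 6*x - 30*y1 + 30*y2) * (45*x^2 + 8*x - 18) =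
      270*x^3 + 723*x^2 - 1248*x + 450 := by
    linear_combination (-(180 + 150*x)) * e1 +
      ((60 + 50*x)*(9*x - 5) + 10*(45*x^2 + 8*x - 18)) * e2 + (100*x + 120) * hE
  nlinarith [hkey, hP, hA]

lemma keyS : ∀ p ∈ setS, -2 * p.1 + 10 * p.2.1 - 10 * p.2.2 < 5 := by
  rintro ⟨x, y1, y2⟩ ⟨⟨_, ⟨h10, h11⟩, _⟩, e1, e2⟩
  exact keyIneq x y1 y2 h10 h11 e1 e2

theorem stmt12 :
    (∀ p ∈ setS, -2 * p.1 + 10 * p.2.1 - 10 * p.2.2 < 5) ∧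
    (-2 * (7/10 : ℝ) + 10 * (7/8 : ℝ) - 10 * (1/6 : ℝ) = 341/60) ∧
    ((341/60 : ℝ) > 5) ∧
    ((7/10 : ℝ), (7/8 : ℝ), (1/6 : ℝ)) ∉ convexHull ℝ setS := by
  refine ⟨keyS, by norm_num, by norm_num, ?_⟩
  intro hmem
  have hlin : IsLinearMap ℝ (fun p : ℝ × ℝ × ℝ => -2 * p.1 + 10 * p.2.1 - 10 * p.2.2) := by
    constructor
    · intro p q; simp [Prod.fst_add, Prod.snd_add]; ring
    · intro c p; simp [Prod.smul_fst, Prod.smul_snd, smul_eq_mul]; ring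
  have hconv : Convex ℝ {p : ℝ × ℝ × ℝ | -2 * p.1 + 10 * p.2.1 - 10 * p.2.2 ≤ 5} :=
    convex_halfSpace_le hlin 5
  have hsub : setS ⊆ {p : ℝ × ℝ × ℝ | -2 * p.1 + 10 * p.2.1 - 10 * p.2.2 ≤ 5} :=
    fun p hp => le_of_lt (keyS p hp)
  have h := convexHull_min hsub hconv hmem
  norm_num at h
end

section
/- For every λ ∈ ℝ², the point (7/10, 7/8, 1/6) belongs to conv(S_λ). -/
open Set

/-- The aggregated constraint function. -/
def Gf (l : ℝ × ℝ) (q : ℝ × ℝ × ℝ) : ℝ :=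
  l.1 * (-2 * q.1 * q.2.1 + 9 * q.1 * q.2.2 + q.2.1 - 5 * q.2.2) +
    l.2 * (5 * q.1 * q.2.1 + 3 * q.2.1 + 3 * q.2.2 - 6)

lemma mem_setAgg {l : ℝ × ℝ} {q : ℝ × ℝ × ℝ} :
    q ∈ setAgg l ↔ q ∈ unitCube ∧ Gf l q = 0 := Iff.rfl

lemma cube_mk {a b c : ℝ} (h1 : 0 ≤ a) (h2 : a ≤ 1) (h3 : 0 ≤ b) (h4 : b ≤ 1)
    (h5 : 0 ≤ c) (h6 : c ≤ 1) : ((a, b, c) : ℝ × ℝ × ℝ) ∈ unitCube :=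
  ⟨⟨h1, h2⟩, ⟨h3, h4⟩, h5, h6⟩

lemma ucomb_lo {u v s : ℝ} (hu0 : 0 ≤ u) (hv0 : 0 ≤ v) (hs0 : 0 ≤ s) (hs1 : s ≤ 1) :
    0 ≤ (1 - s) * u + s * v := by nlinarith

lemma ucomb_hi {u v s : ℝ} (hu1 : u ≤ 1) (hv1 : v ≤ 1) (hs0 : 0 ≤ s) (hs1 : s ≤ 1) :
    (1 - s) * u + s * v ≤ 1 := by nlinarith

lemma seg_coord {zc z'c pc s1 s2 t : ℝ} (hpc : pc = t * zc + (1 - t) * z'c)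
    (hD : (1 - t) * (1 - s1) + t * s2 ≠ 0) :
    (t * s2 / ((1 - t) * (1 - s1) + t * s2)) * ((1 - s1) * zc + s1 * pc) +
      ((1 - t) * (1 - s1) / ((1 - t) * (1 - s1) + t * s2)) * ((1 - s2) * pc + s2 * z'c) = pc := by
  subst hpc
  field_simp
  ring

/-- Key lemma: if the target point lies on a segment inside the cube whose endpoints have
nonpositive `Gf`-value while the point itself has nonnegative value, then by the
intermediate value theorem it is a convex combination of two zeros of `Gf`. -/
lemma key (l : ℝ × ℝ) (x1 y1 v1 x2 y2 v2 t : ℝ)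
    (hc1 : ((x1, y1, v1) : ℝ × ℝ × ℝ) ∈ unitCube)
    (hc2 : ((x2, y2, v2) : ℝ × ℝ × ℝ) ∈ unitCube)
    (ht0 : 0 ≤ t) (ht1 : t ≤ 1)
    (hpx : (7 : ℝ)/10 = t * x1 + (1 - t) * x2)
    (hpy : (7 : ℝ)/8 = t * y1 + (1 - t) * y2)
    (hpz : (1 : ℝ)/6 = t * v1 + (1 - t) * v2)
    (h1 : Gf l (x1, y1, v1) ≤ 0) (h2 : Gf l (x2, y2, v2) ≤ 0)
    (h0 : 0 ≤ Gf l ((7/10 : ℝ), (7/8 : ℝ), (1/6 : ℝ))) :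
    ((7/10 : ℝ), (7/8 : ℝ), (1/6 : ℝ)) ∈ convexHull ℝ (setAgg l) := by
  have hptcube : (((7:ℝ)/10, (7:ℝ)/8, (1:ℝ)/6) : ℝ × ℝ × ℝ) ∈ unitCube :=
    cube_mk (by norm_num) (by norm_num) (by norm_num) (by norm_num) (by norm_num) (by norm_num)
  by_cases hG0 : Gf l ((7/10 : ℝ), (7/8 : ℝ), (1/6 : ℝ)) = 0
  · exact subset_convexHull ℝ _ ⟨hptcube, hG0⟩
  have hGp : 0 < Gf l ((7/10 : ℝ), (7/8 : ℝ), (1/6 : ℝ)) := lt_of_le_of_ne h0 (Ne.symm hG0)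
  obtain ⟨⟨hx10, hx11⟩, ⟨hy10, hy11⟩, hv10, hv11⟩ := hc1
  obtain ⟨⟨hx20, hx21⟩, ⟨hy20, hy21⟩, hv20, hv21⟩ := hc2
  -- first intermediate value: from (x1,y1,v1) to the point
  have hF1c : Continuous (fun s : ℝ =>
      Gf l ((1 - s) * x1 + s * (7/10), (1 - s) * y1 + s * (7/8), (1 - s) * v1 + s * (1/6))) := by
    simp only [Gf]
    fun_prop
  obtain ⟨s1, hs1, hF1⟩ := intermediate_value_Icc (zero_le_one) hF1c.continuousOn
    (by
      constructor
      · simpa using h1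
      · simpa using hGp.le)
  have hs1lt : s1 < 1 := by
    rcases lt_or_eq_of_le hs1.2 with h | h
    · exact h
    · exfalso
      rw [h] at hF1
      norm_num at hF1
      exact hG0 hF1
  -- second intermediate value: from the point to (x2,y2,v2)
  have hF2c : Continuous (fun s : ℝ =>
      Gf l ((1 - s) * (7/10) + s * x2, (1 - s) * (7/8) + s * y2, (1 - s) * (1/6) + s * v2)) := by
    simp only [Gf]
    fun_prop
  obtain ⟨s2, hs2, hF2⟩ := intermediate_value_Icc' (zero_le_one) hF2c.continuousOn
    (by
      constructor
      · simpa using h2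
      · simpa using hGp.le)
  have hs2pos : 0 < s2 := by
    rcases lt_or_eq_of_le hs2.1 with h | h
    · exact h
    · exfalso
      rw [← h] at hF2
      norm_num at hF2
      exact hG0 hF2
  -- the two zeros
  have hw1mem : (((1 - s1) * x1 + s1 * (7/10), (1 - s1) * y1 + s1 * (7/8),
      (1 - s1) * v1 + s1 * (1/6)) : ℝ × ℝ × ℝ) ∈ setAgg l := by
    refine ⟨cube_mk ?_ ?_ ?_ ?_ ?_ ?_, hF1⟩
    · exact ucomb_lo hx10 (by norm_num) hs1.1 hs1.2
    · exact ucomb_hi hx11 (by norm_num) hs1.1 hs1.2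
    · exact ucomb_lo hy10 (by norm_num) hs1.1 hs1.2
    · exact ucomb_hi hy11 (by norm_num) hs1.1 hs1.2
    · exact ucomb_lo hv10 (by norm_num) hs1.1 hs1.2
    · exact ucomb_hi hv11 (by norm_num) hs1.1 hs1.2
  have hw2mem : (((1 - s2) * (7/10) + s2 * x2, (1 - s2) * (7/8) + s2 * y2,
      (1 - s2) * (1/6) + s2 * v2) : ℝ × ℝ × ℝ) ∈ setAgg l := by
    refine ⟨cube_mk ?_ ?_ ?_ ?_ ?_ ?_, hF2⟩
    · exact ucomb_lo (by norm_num) hx20 hs2.1 hs2.2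
    · exact ucomb_hi (by norm_num) hx21 hs2.1 hs2.2
    · exact ucomb_lo (by norm_num) hy20 hs2.1 hs2.2
    · exact ucomb_hi (by norm_num) hy21 hs2.1 hs2.2
    · exact ucomb_lo (by norm_num) hv20 hs2.1 hs2.2
    · exact ucomb_hi (by norm_num) hv21 hs2.1 hs2.2
  -- the point is a convex combination of the two zeros
  have hDpos : 0 < (1 - t) * (1 - s1) + t * s2 := by
    rcases lt_or_eq_of_le ht0 with htpos | hteq
    · have h1' : 0 < t * s2 := mul_pos htpos hs2pos
      have h2' : 0 ≤ (1 - t) * (1 - s1) := mul_nonneg (by linarith) (by linarith)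
      linarith
    · rw [← hteq]
      nlinarith
  have hseg : (((7:ℝ)/10, (7:ℝ)/8, (1:ℝ)/6) : ℝ × ℝ × ℝ) ∈
      segment ℝ
        (((1 - s1) * x1 + s1 * (7/10), (1 - s1) * y1 + s1 * (7/8),
          (1 - s1) * v1 + s1 * (1/6)) : ℝ × ℝ × ℝ)
        (((1 - s2) * (7/10) + s2 * x2, (1 - s2) * (7/8) + s2 * y2,
          (1 - s2) * (1/6) + s2 * v2) : ℝ × ℝ × ℝ) := by
    refine ⟨t * s2 / ((1 - t) * (1 - s1) + t * s2),
      (1 - t) * (1 - s1) / ((1 - t) * (1 - s1) + t * s2), ?_, ?_, ?_, ?_⟩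
    · exact div_nonneg (mul_nonneg ht0 hs2.1) hDpos.le
    · exact div_nonneg (mul_nonneg (by linarith) (by linarith)) hDpos.le
    · rw [← add_div, div_eq_one_iff_eq hDpos.ne']
      ring
    · simp only [Prod.smul_mk, Prod.mk_add_mk, smul_eq_mul, Prod.mk.injEq]
      exact ⟨seg_coord hpx hDpos.ne', seg_coord hpy hDpos.ne', seg_coord hpz hDpos.ne'⟩
  exact segment_subset_convexHull hw1mem hw2mem hseg

lemma Gf_smul (c : ℝ) (l : ℝ × ℝ) (q : ℝ × ℝ × ℝ) : Gf (c • l) q = c * Gf l q := by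
  simp only [Gf, Prod.smul_fst, Prod.smul_snd, smul_eq_mul]
  ring

lemma setAgg_smul {c : ℝ} (hc : c ≠ 0) (l : ℝ × ℝ) : setAgg (c • l) = setAgg l := by
  ext q
  rw [mem_setAgg, mem_setAgg, Gf_smul]
  constructor
  · rintro ⟨hq, he⟩
    refine ⟨hq, ?_⟩
    rcases mul_eq_zero.1 he with h | h
    · exact absurd h hc
    · exact h
  · rintro ⟨hq, he⟩
    exact ⟨hq, by rw [he, mul_zero]⟩

/-- The sector `λ₁ < 0 ≤ λ₂ + 5λ₁` (normalized to `λ = (-μ, 1)`, `0 < μ ≤ 1/5`). -/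
lemma sector {μ : ℝ} (hμ0 : 0 < μ) (hμ1 : μ ≤ 1/5) :
    ((7/10 : ℝ), (7/8 : ℝ), (1/6 : ℝ)) ∈ convexHull ℝ (setAgg (-μ, 1)) := by
  refine key (-μ, 1) (13/25) 1 (2/15 - 31*μ/1125) 1 (2/3) (2/9 + 31*μ/675) (5/8)
    (cube_mk (by norm_num) (by norm_num) (by norm_num) (by norm_num) (by nlinarith) (by nlinarith))
    (cube_mk (by norm_num) (by norm_num) (by norm_num) (by norm_num) (by nlinarith) (by nlinarith))
    (by norm_num) (by norm_num) (by norm_num) (by norm_num) (by ring) ?_ ?_ ?_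
  · simp only [Gf]
    nlinarith [sq_nonneg μ]
  · simp only [Gf]
    nlinarith [sq_nonneg μ, hμ0.le]
  · simp only [Gf]
    nlinarith [hμ0.le]

lemma main_nonneg (l : ℝ × ℝ) (hc : 0 ≤ Gf l ((7/10 : ℝ), (7/8 : ℝ), (1/6 : ℝ))) :
    ((7/10 : ℝ), (7/8 : ℝ), (1/6 : ℝ)) ∈ convexHull ℝ (setAgg l) := by
  have he : Gf l ((7/10 : ℝ), (7/8 : ℝ), (1/6 : ℝ)) = l.1 * (-2/15) + l.2 * (3/16) := by
    simp only [Gf]; ring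
  rw [he] at hc
  rcases le_or_gt 0 l.1 with hl1 | hl1
  · -- pair P0
    exact key l (1/2) 1 (1/6) 1 (11/16) (1/6) (3/5)
      (cube_mk (by norm_num) (by norm_num) (by norm_num) (by norm_num) (by norm_num) (by norm_num))
      (cube_mk (by norm_num) (by norm_num) (by norm_num) (by norm_num) (by norm_num) (by norm_num))
      (by norm_num) (by norm_num) (by norm_num) (by norm_num) (by norm_num)
      (by simp only [Gf]; norm_num; linarith)
      (by simp only [Gf]; norm_num; linarith)
      (by rw [he]; linarith)
  rcases le_or_gt (-5 * l.1) l.2 with h5 | h5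
  · -- sector lemma via scaling
    have hl2 : 0 < l.2 := by linarith
    have hμ0 : 0 < -l.1 / l.2 := div_pos (by linarith) hl2
    have hμ1 : -l.1 / l.2 ≤ 1/5 := by rw [div_le_iff₀ hl2]; linarith
    have hs := sector hμ0 hμ1
    have h1 : ((-(-l.1 / l.2), (1:ℝ)) : ℝ × ℝ) = (l.2)⁻¹ • l := by
      have hfst : -(-l.1 / l.2) = ((l.2)⁻¹ • l).1 := by
        simp only [Prod.smul_fst, smul_eq_mul]
        field_simp
      have hsnd : (1:ℝ) = ((l.2)⁻¹ • l).2 := by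
        simp only [Prod.smul_snd, smul_eq_mul]
        field_simp
      exact Prod.ext hfst hsnd
    rw [h1, setAgg_smul (inv_ne_zero hl2.ne')] at hs
    exact hs
  -- fixed pairs region: l.1 < 0, -32/45 ≤ l.2/(-l.1) ≤ 5
  rcases le_or_gt (-(6/5) * l.1) l.2 with hA | hA
  · -- P1 : r ∈ [6/5, 5]
    exact key l (23/40) 1 0 1 (23/40) (17/30) (12/17)
      (cube_mk (by norm_num) (by norm_num) (by norm_num) (by norm_num) (by norm_num) (by norm_num))
      (cube_mk (by norm_num) (by norm_num) (by norm_num) (by norm_num) (by norm_num) (by norm_num))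
      (by norm_num) (by norm_num) (by norm_num) (by norm_num) (by norm_num)
      (by simp only [Gf]; norm_num; linarith)
      (by simp only [Gf]; norm_num; linarith)
      (by rw [he]; linarith)
  rcases le_or_gt (-(1/5) * l.1) l.2 with hB | hB
  · -- P2 : r ∈ [1/5, 6/5]
    exact key l 1 (13/20) (7/15) (8/15) 1 0 (5/14)
      (cube_mk (by norm_num) (by norm_num) (by norm_num) (by norm_num) (by norm_num) (by norm_num))
      (cube_mk (by norm_num) (by norm_num) (by norm_num) (by norm_num) (by norm_num) (by norm_num))
      (by norm_num) (by norm_num) (by norm_num) (by norm_num) (by norm_num)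
      (by simp only [Gf]; norm_num; linarith)
      (by simp only [Gf]; norm_num; linarith)
      (by rw [he]; linarith)
  rcases le_or_gt ((1/5) * l.1) l.2 with hC | hC
  · -- P3 : r ∈ [-1/5, 1/5]
    exact key l (13/40) 1 (1/24) 1 (31/40) (4/15) (4/9)
      (cube_mk (by norm_num) (by norm_num) (by norm_num) (by norm_num) (by norm_num) (by norm_num))
      (cube_mk (by norm_num) (by norm_num) (by norm_num) (by norm_num) (by norm_num) (by norm_num))
      (by norm_num) (by norm_num) (by norm_num) (by norm_num) (by norm_num)
      (by simp only [Gf]; norm_num; linarith)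
      (by simp only [Gf]; norm_num; linarith)
      (by rw [he]; linarith)
  rcases le_or_gt ((31/100) * l.1) l.2 with hD | hD
  · -- P4 : r ∈ [-31/100, -1/5]
    exact key l (77/80) (1057/1280) (223/960) (1/30) 1 0 (160/223)
      (cube_mk (by norm_num) (by norm_num) (by norm_num) (by norm_num) (by norm_num) (by norm_num))
      (cube_mk (by norm_num) (by norm_num) (by norm_num) (by norm_num) (by norm_num) (by norm_num))
      (by norm_num) (by norm_num) (by norm_num) (by norm_num) (by norm_num)
      (by simp only [Gf]; norm_num; linarith)
      (by simp only [Gf]; norm_num; linarith)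
      (by rw [he]; linarith)
  rcases le_or_gt ((38/100) * l.1) l.2 with hE | hE
  · -- P5 : r ∈ [-38/100, -31/100]
    exact key l (79/120) 1 (1/8) (119/120) 0 (11/24) (7/8)
      (cube_mk (by norm_num) (by norm_num) (by norm_num) (by norm_num) (by norm_num) (by norm_num))
      (cube_mk (by norm_num) (by norm_num) (by norm_num) (by norm_num) (by norm_num) (by norm_num))
      (by norm_num) (by norm_num) (by norm_num) (by norm_num) (by norm_num)
      (by simp only [Gf]; norm_num; linarith)
      (by simp only [Gf]; norm_num; linarith)
      (by rw [he]; linarith)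
  rcases le_or_gt ((1/2) * l.1) l.2 with hF | hF
  · -- P6 : r ∈ [-1/2, -38/100]
    exact key l 1 (17/40) (19/60) (37/60) 1 (1/8) (5/23)
      (cube_mk (by norm_num) (by norm_num) (by norm_num) (by norm_num) (by norm_num) (by norm_num))
      (cube_mk (by norm_num) (by norm_num) (by norm_num) (by norm_num) (by norm_num) (by norm_num))
      (by norm_num) (by norm_num) (by norm_num) (by norm_num) (by norm_num)
      (by simp only [Gf]; norm_num; linarith)
      (by simp only [Gf]; norm_num; linarith)
      (by rw [he]; linarith)
  rcases le_or_gt ((13/20) * l.1) l.2 with hG | hG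
  · -- P7 : r ∈ [-13/20, -1/2]
    exact key l 1 (11/40) (7/15) (51/80) 1 (5/48) (5/29)
      (cube_mk (by norm_num) (by norm_num) (by norm_num) (by norm_num) (by norm_num) (by norm_num))
      (cube_mk (by norm_num) (by norm_num) (by norm_num) (by norm_num) (by norm_num) (by norm_num))
      (by norm_num) (by norm_num) (by norm_num) (by norm_num) (by norm_num)
      (by simp only [Gf]; norm_num; linarith)
      (by simp only [Gf]; norm_num; linarith)
      (by rw [he]; linarith)
  · -- P8 : r ∈ [-32/45, -13/20]
    exact key l 1 (17/40) (7/15) (37/60) 1 (1/12) (5/23)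
      (cube_mk (by norm_num) (by norm_num) (by norm_num) (by norm_num) (by norm_num) (by norm_num))
      (cube_mk (by norm_num) (by norm_num) (by norm_num) (by norm_num) (by norm_num) (by norm_num))
      (by norm_num) (by norm_num) (by norm_num) (by norm_num) (by norm_num)
      (by simp only [Gf]; norm_num; linarith)
      (by simp only [Gf]; norm_num; linarith)
      (by rw [he]; linarith)

theorem stmt13 (l : ℝ × ℝ) :
    ((7/10 : ℝ), (7/8 : ℝ), (1/6 : ℝ)) ∈ convexHull ℝ (setAgg l) := by
  rcases le_or_gt 0 (Gf l ((7/10 : ℝ), (7/8 : ℝ), (1/6 : ℝ))) with h | h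
  · exact main_nonneg l h
  · have hneg : 0 ≤ Gf (-l) ((7/10 : ℝ), (7/8 : ℝ), (1/6 : ℝ)) := by
      have : Gf (-l) ((7/10 : ℝ), (7/8 : ℝ), (1/6 : ℝ)) =
          -Gf l ((7/10 : ℝ), (7/8 : ℝ), (1/6 : ℝ)) := by
        simp only [Gf, Prod.fst_neg, Prod.snd_neg]
        ring
      rw [this]
      linarith
    have hs := main_nonneg (-l) hneg
    have : setAgg (-l) = setAgg l := by
      have h1 : (-l : ℝ × ℝ) = (-1 : ℝ) • l := by
        simp
      rw [h1, setAgg_smul (by norm_num : (-1:ℝ) ≠ 0)]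
    rwa [this] at hs
end
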